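/- Under the hypotheses of the truncated Theorem 1 setup — positive integers N < M′; c₁, c₂ > 0; ρₓ, ρᵤ ≥ 0; γ > 0; 0 < x_L < x_R < π; ωₙ = n², ζₙ = (c₁ωₙ⁻¹+c₂ωₙ)/2, bₙ = n√(2/π)(cos(n x_R) − cos(n x_L)); Ω = diag(ω₁,…,ω_N); A = [[0_N,I_N],[−Ω²,−(c₁I_N+c₂Ω²)]]; B = (0,…,0,b₁,…,b_N)ᵀ; E = [0_N; I_N]; Q = diag(1+ρₓω₁²,…,1+ρₓω_N²,0,…,0); ρ_∞ > 0 and symmetric positive definite P satisfying PA + AᵀP − P(BR⁻¹Bᵀ − γ⁻²EEᵀ)P + Q = 0 with R = ρᵤ + ρ_∞; for N < n ≤ M′, ρₙ > 0 with Σ_{n=N+1}^{M′} ρₙ ≤ ρ_∞ and symmetric positive definite Pₙ satisfying PₙAₙ + AₙᵀPₙ + γ⁻²Pₙ[[0,0],[0,1+γ²bₙ²/ρₙ]]Pₙ + [[1+ρₓωₙ²,0],[0,0]] = 0 with Aₙ = [[0,1],[−ωₙ²,−2ζₙωₙ]] — suppose z₁,…,z_{M′} : [0,∞) → ℝ are twice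 continuously differentiable, satisfy z̈ₙ + 2ζₙωₙżₙ + ωₙ²zₙ = bₙu with u(t) = −R⁻¹BᵀP z^N(t), z^N = (z₁,…,z_N,ż₁,…,ż_N)ᵀ, and arbitrary initial conditions (no disturbance, wₙ ≡ 0). Then the function V(t) = z^N(t)ᵀ P z^N(t) + Σ_{n=N+1}^{M′} z̄ₙ(t)ᵀ Pₙ z̄ₙ(t), where z̄ₙ = (zₙ, żₙ)ᵀ, is non-increasing on [0,∞). -/

import Mathlib

open Matrix Set

lemma quad_hasDerivWithinAt {n : Type*} [Fintype n] (M : Matrix n n ℝ)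
    (x : ℝ → n → ℝ) (dx : n → ℝ) (s : Set ℝ) (t : ℝ)
    (hx : ∀ i, HasDerivWithinAt (fun τ => x τ i) (dx i) s t) :
    HasDerivWithinAt (fun τ => x τ ⬝ᵥ M.mulVec (x τ))
      (dx ⬝ᵥ M.mulVec (x t) + x t ⬝ᵥ M.mulVec dx) s t := by
  have h1 : HasDerivWithinAt (fun τ => ∑ i, ∑ j, x τ i * (M i j * x τ j))
      (∑ i, ∑ j, (dx i * (M i j * x t j) + x t i * (M i j * dx j))) s t := by
    apply HasDerivWithinAt.fun_sum; intro i _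
    apply HasDerivWithinAt.fun_sum; intro j _
    exact (hx i).mul ((hx j).const_mul (M i j))
  have h2 : (fun τ => x τ ⬝ᵥ M.mulVec (x τ))
      = fun τ => ∑ i, ∑ j, x τ i * (M i j * x τ j) := by
    funext τ; simp [dotProduct, Matrix.mulVec, Finset.mul_sum]
  have h3 : dx ⬝ᵥ M.mulVec (x t) + x t ⬝ᵥ M.mulVec dx
      = ∑ i, ∑ j, (dx i * (M i j * x t j) + x t i * (M i j * dx j)) := by
    simp [dotProduct, Matrix.mulVec, Finset.mul_sum, Finset.sum_add_distrib]
  rw [h2, h3]; exact h1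

lemma swap_dot {m n : Type*} [Fintype m] [Fintype n] (M : Matrix m n ℝ) (v : n → ℝ) (w : m → ℝ) :
    (M *ᵥ v) ⬝ᵥ w = v ⬝ᵥ (Mᵀ *ᵥ w) := by
  rw [dotProduct_mulVec, vecMul_transpose]

lemma residual_bound (γ ρn bn ω0 ζ0 ρx zv zv' zv'' uu : ℝ)
    (hγ : 0 < γ) (hρ : 0 < ρn) (hρx : 0 ≤ ρx)
    (Pm : Matrix (Fin 2) (Fin 2) ℝ) (hsym : Pm.IsSymm)
    (heq : Pm * !![0, 1; -ω0 ^ 2, -(2 * ζ0 * ω0)]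
      + (!![0, 1; -ω0 ^ 2, -(2 * ζ0 * ω0)])ᵀ * Pm
      + (γ ^ 2)⁻¹ • (Pm * !![0, 0; 0, 1 + γ ^ 2 * bn ^ 2 / ρn] * Pm)
      + !![1 + ρx * ω0 ^ 2, 0; 0, 0] = 0)
    (hode : zv'' + 2 * ζ0 * ω0 * zv' + ω0 ^ 2 * zv = bn * uu) :
    ![zv', zv''] ⬝ᵥ Pm *ᵥ ![zv, zv'] + ![zv, zv'] ⬝ᵥ Pm *ᵥ ![zv', zv''] ≤ ρn * uu ^ 2 := by
  have hγ2 : (0:ℝ) < γ ^ 2 := by positivity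
  have hs10 : Pm 1 0 = Pm 0 1 := by
    have := congrFun (congrFun hsym 0) 1
    simpa [Matrix.transpose_apply] using this
  have e00 := congrFun (congrFun heq 0) 0
  have e01 := congrFun (congrFun heq 0) 1
  have e11 := congrFun (congrFun heq 1) 1
  simp only [Matrix.add_apply, Matrix.smul_apply, Matrix.zero_apply, smul_eq_mul,
    Matrix.mul_apply, Fin.sum_univ_two, Matrix.transpose_apply] at e00 e01 e11
  simp [hs10] at e00 e01 e11
  field_simp at e00 e01 e11
  set a := Pm 0 0 with ha
  set β := Pm 0 1 with hβ
  set c := Pm 1 1 with hc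
  have E00 : -2*β*ω0^2*γ^2*ρn + β^2*(ρn + γ^2*bn^2) + (1+ρx*ω0^2)*γ^2*ρn = 0 := by
    linear_combination e00
  have E01 : (a - 2*ζ0*ω0*β - ω0^2*c)*γ^2*ρn + β*c*(ρn + γ^2*bn^2) = 0 := by
    linear_combination e01
  have E11 : (2*β - 4*ζ0*ω0*c)*γ^2*ρn + c^2*(ρn + γ^2*bn^2) = 0 := by
    linear_combination e11
  have hdot : ![zv', zv''] ⬝ᵥ Pm *ᵥ ![zv, zv'] + ![zv, zv'] ⬝ᵥ Pm *ᵥ ![zv', zv'']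
      = 2 * (a * zv * zv' + β * zv * zv'' + β * zv' * zv' + c * zv' * zv'') := by
    simp [dotProduct, Matrix.mulVec, Fin.sum_univ_two, hs10]
    ring
  have hzpp : zv'' = bn * uu - 2 * ζ0 * ω0 * zv' - ω0 ^ 2 * zv := by linarith
  set p := β * zv + c * zv' with hp
  have ident : γ^2*ρn * (2 * (a * zv * zv' + β * zv * zv'' + β * zv' * zv' + c * zv' * zv''))
      = -(ρn + γ^2*bn^2) * p^2 - γ^2*ρn*(1+ρx*ω0^2)*zv^2 + 2*γ^2*ρn*bn*uu*p := by
    rw [hzpp, hp]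
    linear_combination zv^2 * E00 + 2*zv*zv' * E01 + zv'^2 * E11
  rw [hdot]
  nlinarith [ident, sq_nonneg (bn*p - ρn*uu), mul_pos hγ2 hρ,
    mul_nonneg hγ2.le (sq_nonneg (bn*p - ρn*uu)), mul_nonneg hρ.le (sq_nonneg p),
    mul_nonneg (mul_pos hγ2 hρ).le (sq_nonneg zv),
    mul_nonneg (mul_nonneg (mul_pos hγ2 hρ).le hρx) (mul_nonneg (sq_nonneg ω0) (sq_nonneg zv))]

/-- Remark 5 (internal stability) in the finite modal truncation: along
disturbance-free closed-loop trajectories, the Lyapunov functional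
V(t) = z^NᵀPz^N + Σₙ z̄ₙᵀPₙz̄ₙ is non-increasing on [0,∞). -/
theorem stmt_19 (N M' : ℕ) (hN : 0 < N) (hNM : N < M')
    (c₁ c₂ : ℝ) (hc₁ : 0 < c₁) (hc₂ : 0 < c₂)
    (ρx ρu : ℝ) (hρx : 0 ≤ ρx) (hρu : 0 ≤ ρu)
    (γ : ℝ) (hγ : 0 < γ)
    (xL xR : ℝ) (hxL : 0 < xL) (hLR : xL < xR) (hxR : xR < Real.pi)
    (ω ζ b : ℕ → ℝ)
    (hω : ∀ n, ω n = (n : ℝ) ^ 2)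
    (hζ : ∀ n, ζ n = (c₁ * (ω n)⁻¹ + c₂ * ω n) / 2)
    (hb : ∀ n, b n = (n : ℝ) * Real.sqrt (2 / Real.pi) *
      (Real.cos (n * xR) - Real.cos (n * xL)))
    (A : Matrix (Fin N ⊕ Fin N) (Fin N ⊕ Fin N) ℝ)
    (hA : A = Matrix.fromBlocks 0 1
      (-(Matrix.diagonal fun i : Fin N => (ω ((i : ℕ) + 1)) ^ 2))
      (-(c₁ • (1 : Matrix (Fin N) (Fin N) ℝ)
         + c₂ • Matrix.diagonal fun i : Fin N => (ω ((i : ℕ) + 1)) ^ 2)))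
    (B : (Fin N ⊕ Fin N) → ℝ)
    (hB : B = Sum.elim (fun _ => (0 : ℝ)) (fun i : Fin N => b ((i : ℕ) + 1)))
    (E : Matrix (Fin N ⊕ Fin N) (Fin N) ℝ)
    (hE : E = Sum.elim (fun _ _ => (0 : ℝ)) (fun i j => if i = j then 1 else 0))
    (Q : Matrix (Fin N ⊕ Fin N) (Fin N ⊕ Fin N) ℝ)
    (hQ : Q = Matrix.fromBlocks
      (Matrix.diagonal fun i : Fin N => 1 + ρx * (ω ((i : ℕ) + 1)) ^ 2) 0 0 0)
    (ρinf : ℝ) (hρinf : 0 < ρinf) (R : ℝ) (hRdef : R = ρu + ρinf)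
    (P : Matrix (Fin N ⊕ Fin N) (Fin N ⊕ Fin N) ℝ) (hPsymm : P.IsSymm) (hP : P.PosDef)
    (hARE : P * A + Aᵀ * P
      - P * (R⁻¹ • Matrix.vecMulVec B B - (γ ^ 2)⁻¹ • (E * Eᵀ)) * P + Q = 0)
    (ρ : ℕ → ℝ) (Pn : ℕ → Matrix (Fin 2) (Fin 2) ℝ)
    (hresidue : ∀ n, N < n → n ≤ M' → 0 < ρ n ∧ (Pn n).IsSymm ∧ (Pn n).PosDef ∧
      Pn n * !![0, 1; -(ω n) ^ 2, -(2 * ζ n * ω n)]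
      + (!![0, 1; -(ω n) ^ 2, -(2 * ζ n * ω n)])ᵀ * Pn n
      + (γ ^ 2)⁻¹ • (Pn n * !![0, 0; 0, 1 + γ ^ 2 * (b n) ^ 2 / ρ n] * Pn n)
      + !![1 + ρx * (ω n) ^ 2, 0; 0, 0] = 0)
    (hsum : ∑ n ∈ Finset.Ioc N M', ρ n ≤ ρinf)
    (z z' z'' : ℕ → ℝ → ℝ)
    (zN : ℝ → (Fin N ⊕ Fin N) → ℝ)
    (hzN : ∀ t, zN t = Sum.elim (fun i : Fin N => z ((i : ℕ) + 1) t)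
      (fun i : Fin N => z' ((i : ℕ) + 1) t))
    (u : ℝ → ℝ)
    (hu : ∀ t, u t = -(R⁻¹ * (B ⬝ᵥ P.mulVec (zN t))))
    (hz : ∀ n ∈ Finset.Icc 1 M', ∀ t ∈ Ici (0 : ℝ),
      HasDerivWithinAt (z n) (z' n t) (Ici 0) t)
    (hz' : ∀ n ∈ Finset.Icc 1 M', ∀ t ∈ Ici (0 : ℝ),
      HasDerivWithinAt (z' n) (z'' n t) (Ici 0) t)
    (hz'' : ∀ n ∈ Finset.Icc 1 M', ContinuousOn (z'' n) (Ici 0))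
    (hode : ∀ n ∈ Finset.Icc 1 M', ∀ t ∈ Ici (0 : ℝ),
      z'' n t + 2 * ζ n * ω n * z' n t + (ω n) ^ 2 * z n t = b n * u t)
    (V : ℝ → ℝ)
    (hV : ∀ t, V t = zN t ⬝ᵥ P.mulVec (zN t)
      + ∑ n ∈ Finset.Ioc N M',
          (![z n t, z' n t] ⬝ᵥ (Pn n).mulVec ![z n t, z' n t])) :
    ∀ s ∈ Ici (0 : ℝ), ∀ t ∈ Ici (0 : ℝ), s ≤ t → V t ≤ V s := by
  have hR : 0 < R := by rw [hRdef]; linarith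
  have hRne : R ≠ 0 := ne_of_gt hR
  have hγ2 : (0:ℝ) < γ ^ 2 := by positivity
  have hmemN : ∀ i : Fin N, (i : ℕ) + 1 ∈ Finset.Icc 1 M' := by
    intro i; have := i.2; simp only [Finset.mem_Icc]; omega
  have hmemIoc : ∀ n ∈ Finset.Ioc N M', n ∈ Finset.Icc 1 M' := by
    intro n hn; simp only [Finset.mem_Ioc] at hn; simp only [Finset.mem_Icc]; omega
  set D : ℝ → (Fin N ⊕ Fin N) → ℝ :=
    fun t => Sum.elim (fun j : Fin N => z' ((j : ℕ) + 1) t)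
      (fun j : Fin N => z'' ((j : ℕ) + 1) t) with hD
  have hzNd : ∀ t ∈ Ici (0:ℝ), ∀ i, HasDerivWithinAt (fun τ => zN τ i) (D t i) (Ici 0) t := by
    intro t ht i
    have hfun : (fun τ => zN τ i)
        = fun τ => Sum.elim (fun j : Fin N => z ((j : ℕ) + 1) τ)
            (fun j : Fin N => z' ((j : ℕ) + 1) τ) i := by
      funext τ; rw [hzN τ]
    rw [hfun, hD]
    cases i with
    | inl j => simpa using hz _ (hmemN j) t ht
    | inr j => simpa using hz' _ (hmemN j) t ht
  set W : ℝ → ℝ := fun t =>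
    (D t ⬝ᵥ P.mulVec (zN t) + zN t ⬝ᵥ P.mulVec (D t)) +
    ∑ n ∈ Finset.Ioc N M',
      (![z' n t, z'' n t] ⬝ᵥ (Pn n).mulVec ![z n t, z' n t]
        + ![z n t, z' n t] ⬝ᵥ (Pn n).mulVec ![z' n t, z'' n t]) with hWdef
  have hVd : ∀ t ∈ Ici (0:ℝ), HasDerivWithinAt V (W t) (Ici 0) t := by
    intro t ht
    have hVfun : V = fun τ => zN τ ⬝ᵥ P.mulVec (zN τ)
        + ∑ n ∈ Finset.Ioc N M', (![z n τ, z' n τ] ⬝ᵥ (Pn n).mulVec ![z n τ, z' n τ]) := by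
      funext τ; exact hV τ
    rw [hVfun, hWdef]
    apply HasDerivWithinAt.add
    · exact quad_hasDerivWithinAt P zN (D t) _ t (hzNd t ht)
    · apply HasDerivWithinAt.fun_sum
      intro n hn
      apply quad_hasDerivWithinAt (Pn n) (fun τ => ![z n τ, z' n τ]) ![z' n t, z'' n t]
      intro i
      fin_cases i
      · simpa using hz n (hmemIoc n hn) t ht
      · simpa using hz' n (hmemIoc n hn) t ht
  have hWle : ∀ t ∈ Ici (0:ℝ), W t ≤ 0 := by
    intro t ht
    have hsymdot : ∀ v w : (Fin N ⊕ Fin N) → ℝ, v ⬝ᵥ P *ᵥ w = w ⬝ᵥ P *ᵥ v := by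
      intro v w
      calc v ⬝ᵥ P *ᵥ w = (v ᵥ* P) ⬝ᵥ w := dotProduct_mulVec v P w
        _ = (P *ᵥ v) ⬝ᵥ w := by conv_lhs => rw [← hPsymm, vecMul_transpose]
        _ = w ⬝ᵥ P *ᵥ v := dotProduct_comm _ _
    set x := zN t with hx
    set s := B ⬝ᵥ P *ᵥ x with hs
    have hut : u t = -(R⁻¹ * s) := hu t
    -- closed loop dynamics
    have hDe : D t = A *ᵥ x + u t • B := by
      funext i
      rw [hD, hA, hB, hx, hzN t, Matrix.fromBlocks_mulVec]
      cases i with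
      | inl j =>
        simp [Matrix.one_mulVec, Matrix.zero_mulVec]
      | inr j =>
        have ho := hode ((j : ℕ) + 1) (hmemN j) t ht
        have hωpos : (0:ℝ) < ω ((j : ℕ) + 1) := by
          rw [hω]
          have : (0:ℝ) < ((j : ℕ) + 1 : ℕ) := by positivity
          positivity
        have hζω : 2 * ζ ((j : ℕ) + 1) * ω ((j : ℕ) + 1)
            = c₁ + c₂ * (ω ((j : ℕ) + 1)) ^ 2 := by
          rw [hζ]
          field_simp
        simp [Matrix.neg_mulVec, Matrix.add_mulVec, Matrix.smul_mulVec,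
          Matrix.one_mulVec, Matrix.mulVec_diagonal]
        linear_combination ho - z' ((j : ℕ) + 1) t * hζω
    -- expand quadratic derivative of the controlled block
    have t1 : D t ⬝ᵥ P *ᵥ x = x ⬝ᵥ (Aᵀ * P) *ᵥ x + u t * s := by
      rw [hDe, add_dotProduct, smul_dotProduct, swap_dot, mulVec_mulVec, smul_eq_mul, ← hs]
    have t2 : x ⬝ᵥ P *ᵥ D t = x ⬝ᵥ (P * A) *ᵥ x + u t * s := by
      rw [hDe, mulVec_add, dotProduct_add, mulVec_smul, dotProduct_smul, mulVec_mulVec,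
        smul_eq_mul, hsymdot x B, ← hs]
    have hPA : P * A + Aᵀ * P
        = P * (R⁻¹ • Matrix.vecMulVec B B - (γ ^ 2)⁻¹ • (E * Eᵀ)) * P - Q := by
      have h : P * A + Aᵀ * P
            - (P * (R⁻¹ • Matrix.vecMulVec B B - (γ ^ 2)⁻¹ • (E * Eᵀ)) * P - Q)
          = P * A + Aᵀ * P
            - P * (R⁻¹ • Matrix.vecMulVec B B - (γ ^ 2)⁻¹ • (E * Eᵀ)) * P + Q := by
        abel
      rw [← sub_eq_zero, h]
      exact hARE
    set y := P *ᵥ x with hy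
    set w := Eᵀ *ᵥ y with hw
    have hwnn : (0:ℝ) ≤ w ⬝ᵥ w := by
      simp only [dotProduct]
      exact Finset.sum_nonneg fun i _ => mul_self_nonneg _
    have hQnn : (0:ℝ) ≤ x ⬝ᵥ Q *ᵥ x := by
      rw [hQ, hx, hzN t, Matrix.fromBlocks_mulVec]
      simp only [Matrix.zero_mulVec, add_zero, zero_add, dotProduct,
        Fintype.sum_sum_type, Sum.elim_inl, Sum.elim_inr, Matrix.mulVec_diagonal,
        Pi.zero_apply, mul_zero]
      simp only [Sum.elim_comp_inl, Sum.elim_comp_inr]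
      apply add_nonneg
      · apply Finset.sum_nonneg
        intro j _
        have h1 : (0:ℝ) ≤ 1 + ρx * (ω ((j : ℕ) + 1)) ^ 2 := by positivity
        nlinarith [sq_nonneg (z ((j : ℕ) + 1) t)]
      · simp
    have hBy : Matrix.vecMulVec B B *ᵥ y = (B ⬝ᵥ y) • B := by
      funext i
      simp only [Matrix.mulVec, Matrix.vecMulVec_apply, dotProduct, Pi.smul_apply,
        smul_eq_mul, mul_assoc, ← Finset.mul_sum]
      ring
    have hsy : B ⬝ᵥ y = s := by rw [hs, hy]
    have hq1 : x ⬝ᵥ (P * (R⁻¹ • Matrix.vecMulVec B B - (γ ^ 2)⁻¹ • (E * Eᵀ)) * P) *ᵥ x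
        = R⁻¹ * (s * s) - (γ ^ 2)⁻¹ * (w ⬝ᵥ w) := by
      rw [← mulVec_mulVec, ← mulVec_mulVec, ← hy]
      rw [sub_mulVec, smul_mulVec, smul_mulVec, hBy, hsy]
      rw [← mulVec_mulVec, ← hw]
      rw [mulVec_sub, dotProduct_sub, mulVec_smul, mulVec_smul, dotProduct_smul,
        dotProduct_smul, mulVec_smul, dotProduct_smul]
      rw [hsymdot x B, ← hs]
      rw [hsymdot x (E *ᵥ w)]
      rw [← hy, swap_dot E w y, ← hw]
      simp only [smul_eq_mul]
    have hfirst : D t ⬝ᵥ P *ᵥ x + x ⬝ᵥ P *ᵥ D t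
        = R⁻¹ * (s * s) - (γ ^ 2)⁻¹ * (w ⬝ᵥ w) - x ⬝ᵥ Q *ᵥ x + 2 * (u t * s) := by
      have t3 : x ⬝ᵥ (P * A + Aᵀ * P) *ᵥ x
          = x ⬝ᵥ (P * A) *ᵥ x + x ⬝ᵥ (Aᵀ * P) *ᵥ x := by
        rw [add_mulVec, dotProduct_add]
      have t4 : x ⬝ᵥ (P * A + Aᵀ * P) *ᵥ x
          = R⁻¹ * (s * s) - (γ ^ 2)⁻¹ * (w ⬝ᵥ w) - x ⬝ᵥ Q *ᵥ x := by
        rw [hPA, sub_mulVec, dotProduct_sub, hq1]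
      rw [t1, t2]
      linarith [t3, t4]
    -- residual bound
    have hres : ∑ n ∈ Finset.Ioc N M',
        (![z' n t, z'' n t] ⬝ᵥ (Pn n).mulVec ![z n t, z' n t]
          + ![z n t, z' n t] ⬝ᵥ (Pn n).mulVec ![z' n t, z'' n t]) ≤ ρinf * (u t)^2 := by
      have step : ∀ n ∈ Finset.Ioc N M',
          (![z' n t, z'' n t] ⬝ᵥ (Pn n).mulVec ![z n t, z' n t]
            + ![z n t, z' n t] ⬝ᵥ (Pn n).mulVec ![z' n t, z'' n t]) ≤ ρ n * (u t)^2 := by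
        intro n hn
        obtain ⟨h1, h2⟩ := Finset.mem_Ioc.mp hn
        obtain ⟨hρn, hsymn, _, heqn⟩ := hresidue n h1 h2
        exact residual_bound γ (ρ n) (b n) (ω n) (ζ n) ρx (z n t) (z' n t) (z'' n t) (u t)
          hγ hρn hρx (Pn n) hsymn heqn (hode n (hmemIoc n hn) t ht)
      calc ∑ n ∈ Finset.Ioc N M', _ ≤ ∑ n ∈ Finset.Ioc N M', ρ n * (u t)^2 :=
            Finset.sum_le_sum step
        _ = (∑ n ∈ Finset.Ioc N M', ρ n) * (u t)^2 := by rw [Finset.sum_mul]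
        _ ≤ ρinf * (u t)^2 := mul_le_mul_of_nonneg_right hsum (sq_nonneg _)
    -- final assembly
    have key : R⁻¹ * (s * s) + 2 * (u t * s) + ρinf * (u t)^2 ≤ 0 := by
      rw [hut]
      have h4 : R⁻¹ * (s * s) + 2 * (-(R⁻¹ * s) * s) + ρinf * (-(R⁻¹ * s))^2
          = -(ρu * (R⁻¹ * s)^2) := by
        have h5 : ρinf = R - ρu := by rw [hRdef]; ring
        rw [h5]
        field_simp
        ring
      rw [h4]
      exact neg_nonpos.mpr (mul_nonneg hρu (sq_nonneg _))
    have hWt : W t = (D t ⬝ᵥ P *ᵥ x + x ⬝ᵥ P *ᵥ D t) +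
        ∑ n ∈ Finset.Ioc N M',
          (![z' n t, z'' n t] ⬝ᵥ (Pn n).mulVec ![z n t, z' n t]
            + ![z n t, z' n t] ⬝ᵥ (Pn n).mulVec ![z' n t, z'' n t]) := by
      rw [hWdef]
    rw [hWt, hfirst]
    have hg : 0 ≤ (γ ^ 2)⁻¹ * (w ⬝ᵥ w) := mul_nonneg (inv_pos.mpr hγ2).le hwnn
    linarith [hres, key, hQnn, hg]
  have hcont : ContinuousOn V (Ici 0) := fun t ht => (hVd t ht).continuousWithinAt
  have hanti : AntitoneOn V (Ici 0) :=
    antitoneOn_of_hasDerivWithinAt_nonpos (convex_Ici 0) hcont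
      (fun t ht => (hVd t (interior_subset ht)).mono interior_subset)
      (fun t ht => hWle t (interior_subset ht))
  intro s hs t ht hst
  exact hanti hs ht hst
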